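/- Let Y ⊆ ℝ^m be finite and nonempty and Z ~ N(0, I_m). For every θ, the gradient ∇F(θ) = E[argmax_{y ∈ Y}(θ+Z)ᵀy] lies in the convex hull of Y; consequently the gradient of the perturbed loss, ∇L(θ) = ∇F(θ) − y*, lies in conv(Y) − y*. -/

import Mathlib

open scoped RealInnerProductSpace
open MeasureTheory

/-- `Z` is a standard Gaussian random vector in `ℝ^m`: its coordinates are independent
and each is distributed as `N(0,1)`. -/
def IsStdGaussian {Ω : Type*} [MeasurableSpace Ω] (μ : Measure Ω) {m : ℕ}
    (Z : Ω → EuclideanSpace ℝ (Fin m)) : Prop :=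
  (∀ i, Measure.map (fun ω => Z ω i) μ = ProbabilityTheory.gaussianReal 0 1) ∧
    ProbabilityTheory.iIndepFun
      (fun i ω => Z ω i) μ

section Aux

open ProbabilityTheory Real

variable {m : ℕ} {Ω : Type*} [MeasurableSpace Ω]

local notation "E" => EuclideanSpace ℝ (Fin m)

/-- The identity is integrable w.r.t. the standard Gaussian. -/
lemma integrable_id_gaussianReal :
    Integrable (fun x : ℝ => x) (ProbabilityTheory.gaussianReal 0 1) := by
  rw [gaussianReal_of_var_ne_zero 0 one_ne_zero,
    integrable_withDensity_iff (measurable_gaussianPDF 0 1)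
      (Filter.Eventually.of_forall fun x => ENNReal.ofReal_lt_top)]
  have : (fun x : ℝ => x * ((gaussianPDF 0 1 x).toReal)) =
      fun x => (√(2 * π))⁻¹ * (x * rexp (-(2⁻¹) * x ^ 2)) := by
    funext x
    rw [gaussianPDF, ENNReal.toReal_ofReal (gaussianPDFReal_nonneg _ _ _), gaussianPDFReal]
    push_cast
    ring_nf
  rw [this]
  exact (integrable_mul_exp_neg_mul_sq (by norm_num : (0:ℝ) < 2⁻¹)).const_mul _

/-- measurability of a coordinate of Z -/
lemma measurable_coord (Z : Ω → E) (hZmeas : Measurable Z) (i : Fin m) :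
    Measurable (fun ω => Z ω i) :=
  (measurable_pi_apply i).comp ((WithLp.measurable_ofLp 2 _).comp hZmeas)

/-- Each coordinate of a standard Gaussian vector is integrable. -/
lemma integrable_coord (μ : Measure Ω) (Z : Ω → E) (hZmeas : Measurable Z)
    (hZ : IsStdGaussian μ Z) (i : Fin m) :
    Integrable (fun ω => Z ω i) μ := by
  have h := hZ.1 i
  have : Integrable (fun x : ℝ => x) (Measure.map (fun ω => Z ω i) μ) := by
    rw [h]; exact integrable_id_gaussianReal
  exact (integrable_map_measure aestronglyMeasurable_id
    (measurable_coord Z hZmeas i).aemeasurable).mp this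

/-- inner products with a Gaussian vector are integrable -/
lemma integrable_inner_shift (μ : Measure Ω) [IsProbabilityMeasure μ] (Z : Ω → E)
    (hZmeas : Measurable Z) (hZ : IsStdGaussian μ Z) (θ y : E) :
    Integrable (fun ω => ⟪θ + Z ω, y⟫) μ := by
  have : (fun ω => ⟪θ + Z ω, y⟫) = fun ω => ⟪θ, y⟫ + ∑ i, Z ω i * y i := by
    funext ω
    rw [inner_add_left]
    congr 1
    simp [PiLp.inner_apply, mul_comm]
  rw [this]
  exact (integrable_const _).add <| integrable_finset_sum _ fun i _ =>
    (integrable_coord μ Z hZmeas hZ i).mul_const _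

/-- atomlessness of linear combinations of coordinates -/
lemma null_inner_eq (μ : Measure Ω) [IsProbabilityMeasure μ] (Z : Ω → E)
    (hZmeas : Measurable Z) (hZ : IsStdGaussian μ Z) (v : E) (hv : v ≠ 0) (c : ℝ) :
    μ {ω | ⟪Z ω, v⟫ = c} = 0 := by
  classical
  obtain ⟨j, hj⟩ : ∃ j, v j ≠ 0 := by
    by_contra h
    push_neg at h
    exact hv (by ext i; exact h i)
  set f : Fin m → Ω → ℝ := fun i ω => Z ω i * v i with hf
  have hfmeas : ∀ i, Measurable (f i) := fun i => (measurable_coord Z hZmeas i).mul_const _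
  have hindep : iIndepFun f μ :=
    hZ.2.comp (fun i x => x * v i) (fun i => measurable_mul_const _)
  set W : Ω → ℝ := ∑ i ∈ Finset.univ.erase j, f i with hW
  have hWapp : ∀ ω, W ω = ∑ i ∈ Finset.univ.erase j, f i ω := by
    intro ω; rw [hW]; simp
  have hWmeas : Measurable W := by
    have : W = fun ω => ∑ i ∈ Finset.univ.erase j, f i ω := funext hWapp
    rw [this]
    exact Finset.measurable_sum _ fun i _ => hfmeas i
  have hIndep : IndepFun W (f j) μ :=
    hindep.indepFun_finsetSum_of_notMem hfmeas (Finset.notMem_erase j _)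
  have hmap : μ.map (fun ω => (W ω, f j ω)) = (μ.map W).prod (μ.map (f j)) :=
    (indepFun_iff_map_prod_eq_prod_map_map hWmeas.aemeasurable
      (hfmeas j).aemeasurable).mp hIndep
  have hS : MeasurableSet {p : ℝ × ℝ | p.1 + p.2 = c} :=
    measurableSet_eq_fun (measurable_fst.add measurable_snd) measurable_const
  have hset : {ω | ⟪Z ω, v⟫ = c} =
      (fun ω => (W ω, f j ω)) ⁻¹' {p : ℝ × ℝ | p.1 + p.2 = c} := by
    ext ω
    have h1 : ⟪Z ω, v⟫ = ∑ i, f i ω := by simp [hf, PiLp.inner_apply, mul_comm]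
    simp only [Set.mem_setOf_eq, Set.mem_preimage, h1, hWapp ω]
    rw [Finset.sum_erase_add _ _ (Finset.mem_univ j)]
  have hmapj : μ.map (f j) = gaussianReal (v j * 0) (⟨(v j)^2, sq_nonneg _⟩ * 1) := by
    have : f j = (· * v j) ∘ (fun ω => Z ω j) := rfl
    rw [this, ← Measure.map_map (measurable_mul_const _) (measurable_coord Z hZmeas j),
      hZ.1 j, gaussianReal_map_mul_const]
    rfl
  have hvar : (⟨(v j)^2, sq_nonneg _⟩ * 1 : NNReal) ≠ 0 := by
    simp only [mul_one, ne_eq, ← NNReal.coe_eq_zero]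
    exact fun h => pow_ne_zero 2 hj ((mul_one _).symm.trans h)
  have hsingleton : ∀ a : ℝ, (μ.map (f j)) {b : ℝ | a + b = c} = 0 := by
    intro a
    have : {b : ℝ | a + b = c} = {c - a} := by
      ext b
      simp only [Set.mem_setOf_eq, Set.mem_singleton_iff]
      constructor <;> intro h <;> linarith
    rw [this, hmapj]
    exact gaussianReal_absolutelyContinuous _ hvar (Real.volume_singleton)
  rw [hset, ← Measure.map_apply (hWmeas.prodMk (hfmeas j)) hS, hmap, Measure.prod_apply hS]
  simp only [Set.preimage_setOf_eq]
  rw [lintegral_congr fun a => hsingleton a, lintegral_zero]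

/-- strictness of the argmax a.e. -/
lemma ae_strict_argmax (μ : Measure Ω) [IsProbabilityMeasure μ]
    (Y : Finset E) (Z : Ω → E) (hZmeas : Measurable Z) (hZ : IsStdGaussian μ Z)
    (g : E → E) (hg : ∀ z, g z ∈ Y ∧ ∀ y ∈ Y, ⟪z, y⟫ ≤ ⟪z, g z⟫) (θ : E) :
    ∀ᵐ ω ∂μ, ∀ y ∈ Y, y ≠ g (θ + Z ω) → ⟪θ + Z ω, y⟫ < ⟪θ + Z ω, g (θ + Z ω)⟫ := by
  have key : ∀ y1 y2 : E, y1 ≠ y2 →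
      μ {ω | ⟪θ + Z ω, y1⟫ = ⟪θ + Z ω, y2⟫} = 0 := by
    intro y1 y2 hne
    have hset : {ω | ⟪θ + Z ω, y1⟫ = ⟪θ + Z ω, y2⟫}
        = {ω | ⟪Z ω, y1 - y2⟫ = ⟪θ, y2 - y1⟫} := by
      ext ω
      simp only [Set.mem_setOf_eq, inner_sub_right, inner_add_left]
      constructor <;> intro h <;> linarith
    rw [hset]
    exact null_inner_eq μ Z hZmeas hZ _ (sub_ne_zero.mpr hne) _
  have hae : ∀ᵐ ω ∂μ, ∀ y1 ∈ Y, ∀ y2 ∈ Y, y1 ≠ y2 →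
      ⟪θ + Z ω, y1⟫ ≠ ⟪θ + Z ω, y2⟫ := by
    simp only [← Finset.mem_coe]
    rw [ae_ball_iff Y.countable_toSet]
    intro y1 _
    rw [ae_ball_iff Y.countable_toSet]
    intro y2 _
    by_cases hne : y1 = y2
    · exact Filter.Eventually.of_forall fun ω h => absurd hne h
    · have := key y1 y2 hne
      refine measure_mono_null ?_ this
      intro ω hω
      simp only [Set.mem_setOf_eq] at hω ⊢
      exact not_not.mp fun h => hω fun _ => h
  filter_upwards [hae] with ω hω y hy hne
  exact lt_of_le_of_ne ((hg (θ + Z ω)).2 y hy)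
    (hω y hy (g (θ + Z ω)) (hg (θ + Z ω)).1 hne)

/-- local constancy of a strict argmax -/
lemma eventually_argmax_eq (Y : Finset E) (g : E → E)
    (hg : ∀ z, g z ∈ Y ∧ ∀ y ∈ Y, ⟪z, y⟫ ≤ ⟪z, g z⟫) (z : E)
    (hstrict : ∀ y ∈ Y, y ≠ g z → ⟪z, y⟫ < ⟪z, g z⟫) :
    ∀ᶠ w in nhds z, g w = g z := by
  have hfin : ∀ᶠ w in nhds z, ∀ y ∈ Y, y ≠ g z → ⟪w, y⟫ < ⟪w, g z⟫ := by
    rw [Filter.eventually_all_finset]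
    intro y hy
    by_cases hne : y = g z
    · exact Filter.Eventually.of_forall fun w h => absurd hne h
    · have hc : Continuous fun w : E => ⟪w, g z⟫ - ⟪w, y⟫ :=
        (continuous_id.inner continuous_const).sub (continuous_id.inner continuous_const)
      have hpos : (0 : ℝ) < ⟪z, g z⟫ - ⟪z, y⟫ := sub_pos.mpr (hstrict y hy hne)
      have hev := (hc.tendsto z).eventually (eventually_gt_nhds hpos)
      filter_upwards [hev] with w hw _
      linarith [hw]
  filter_upwards [hfin] with w hw
  by_contra hne
  have h1 : ⟪w, g z⟫ ≤ ⟪w, g w⟫ := (hg w).2 (g z) (hg z).1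
  have h2 : ⟪w, g w⟫ < ⟪w, g z⟫ := hw (g w) (hg w).1 hne
  linarith

/-- integrability of a pointwise finite sup -/
lemma integrable_finset_sup' {α β : Type*} [MeasurableSpace α] (ν : Measure α)
    (s : Finset β) (hs : s.Nonempty) (F : β → α → ℝ)
    (hF : ∀ b ∈ s, Integrable (F b) ν) :
    Integrable (fun a => s.sup' hs (fun b => F b a)) ν := by
  induction hs using Finset.Nonempty.cons_induction with
  | singleton a => simpa using hF a (by simp)
  | cons a s ha hs ih =>
    simp only [Finset.sup'_cons hs]
    exact (hF a (by simp)).sup (ih fun b hb => hF b (Finset.mem_cons_of_mem hb))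

/-- integrability of the pointwise max -/
lemma integrable_sup' (μ : Measure Ω) [IsProbabilityMeasure μ]
    (Y : Finset E) (hY : Y.Nonempty) (Z : Ω → E) (hZmeas : Measurable Z)
    (hZ : IsStdGaussian μ Z) (θ : E) :
    Integrable (fun ω => Y.sup' hY (fun y => ⟪θ + Z ω, y⟫)) μ :=
  integrable_finset_sup' μ Y hY _ fun y _ => integrable_inner_shift μ Z hZmeas hZ θ y

end Aux

/-- The gradient `∇F(θ) = E[argmax_{y ∈ Y}(θ+Z)ᵀy]` of the Gaussian-smoothed maximum
lies in the convex hull of `Y`; consequently the gradient of the perturbed loss,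
`∇L(θ) = ∇F(θ) − y*`, lies in `conv(Y) − y*`. -/
theorem smoothed_gradient_mem_convexHull {m : ℕ} {Ω : Type*} [MeasurableSpace Ω]
    (μ : Measure Ω) [IsProbabilityMeasure μ]
    (Y : Finset (EuclideanSpace ℝ (Fin m))) (hY : Y.Nonempty)
    (ystar : EuclideanSpace ℝ (Fin m)) (hystar : ystar ∈ Y)
    (Z : Ω → EuclideanSpace ℝ (Fin m)) (hZmeas : Measurable Z)
    (hZ : IsStdGaussian μ Z)
    (g : EuclideanSpace ℝ (Fin m) → EuclideanSpace ℝ (Fin m))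
    (hgmeas : Measurable g)
    (hg : ∀ z, g z ∈ Y ∧ ∀ y ∈ Y, ⟪z, y⟫ ≤ ⟪z, g z⟫) :
    ∀ θ : EuclideanSpace ℝ (Fin m),
      gradient (fun θ' : EuclideanSpace ℝ (Fin m) =>
          ∫ ω, Y.sup' hY (fun y => ⟪θ' + Z ω, y⟫) ∂μ) θ = ∫ ω, g (θ + Z ω) ∂μ ∧
      gradient (fun θ' : EuclideanSpace ℝ (Fin m) =>
          ∫ ω, Y.sup' hY (fun y => ⟪θ' + Z ω, y⟫) ∂μ) θ
        ∈ convexHull ℝ (Y : Set (EuclideanSpace ℝ (Fin m))) ∧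
      gradient (fun θ' : EuclideanSpace ℝ (Fin m) =>
          (∫ ω, Y.sup' hY (fun y => ⟪θ' + Z ω, y⟫) ∂μ) - ⟪θ', ystar⟫) θ
        ∈ (fun c => c - ystar) '' convexHull ℝ (Y : Set (EuclideanSpace ℝ (Fin m))) := by
  intro θ
  classical
  obtain ⟨C, hC⟩ : ∃ C : ℝ, ∀ y ∈ Y, ‖y‖ ≤ C :=
    ⟨Y.sup' hY (fun y => ‖y‖), fun y hy => Finset.le_sup' _ hy⟩
  have hgcomp_meas : ∀ θ' : EuclideanSpace ℝ (Fin m),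
      AEStronglyMeasurable (fun ω => g (θ' + Z ω)) μ :=
    fun θ' => (hgmeas.comp (measurable_const.add hZmeas)).aestronglyMeasurable
  have hgint : ∀ θ' : EuclideanSpace ℝ (Fin m), Integrable (fun ω => g (θ' + Z ω)) μ :=
    fun θ' => Integrable.mono' (integrable_const C) (hgcomp_meas θ')
      (Filter.Eventually.of_forall fun ω => hC _ (hg _).1)
  set G := ∫ ω, g (θ + Z ω) ∂μ with hGdef
  set F : EuclideanSpace ℝ (Fin m) → ℝ :=
    fun θ' => ∫ ω, Y.sup' hY (fun y => ⟪θ' + Z ω, y⟫) ∂μ with hFdef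
  have hfeq : ∀ w : EuclideanSpace ℝ (Fin m), Y.sup' hY (fun y => ⟪w, y⟫) = ⟪w, g w⟫ :=
    fun w => le_antisymm (Finset.sup'_le _ _ fun y hy => (hg w).2 y hy)
      (Finset.le_sup' _ (hg w).1)
  have hlow : ∀ w w' : EuclideanSpace ℝ (Fin m),
      ⟪w', g w⟫ ≤ Y.sup' hY (fun y => ⟪w', y⟫) :=
    fun w w' => Finset.le_sup' _ (hg w).1
  set h : EuclideanSpace ℝ (Fin m) → ℝ :=
    fun θ' => ∫ ω, ‖g (θ' + Z ω) - g (θ + Z ω)‖ ∂μ with hhdef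
  have hdiffint : ∀ θ', Integrable (fun ω => ‖g (θ' + Z ω) - g (θ + Z ω)‖) μ :=
    fun θ' => ((hgint θ').sub (hgint θ)).norm
  have hhnn : ∀ θ', 0 ≤ h θ' := fun θ' => integral_nonneg fun ω => norm_nonneg _
  have htendsto : Filter.Tendsto h (nhds θ) (nhds 0) := by
    have h0 : Filter.Tendsto (fun θ' => ∫ ω, ‖g (θ' + Z ω) - g (θ + Z ω)‖ ∂μ)
        (nhds θ) (nhds (∫ (_ : Ω), (0:ℝ) ∂μ)) := by
      apply tendsto_integral_filter_of_dominated_convergence (fun _ => C + C)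
      · exact Filter.Eventually.of_forall fun θ' => (hdiffint θ').aestronglyMeasurable
      · refine Filter.Eventually.of_forall fun θ' =>
          Filter.Eventually.of_forall fun ω => ?_
        rw [norm_norm]
        exact (norm_sub_le _ _).trans
          (add_le_add (hC _ (hg _).1) (hC _ (hg _).1))
      · exact integrable_const _
      · filter_upwards [ae_strict_argmax μ Y Z hZmeas hZ g hg θ] with ω hω
        have hz := eventually_argmax_eq Y g hg (θ + Z ω) hω
        have hcont : Filter.Tendsto (fun θ' : EuclideanSpace ℝ (Fin m) => θ' + Z ω)
            (nhds θ) (nhds (θ + Z ω)) :=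
          ((continuous_id.add continuous_const).tendsto θ)
        refine Filter.Tendsto.congr' ?_
          (tendsto_const_nhds : Filter.Tendsto
            (fun _ : EuclideanSpace ℝ (Fin m) => (0:ℝ)) (nhds θ) (nhds 0))
        filter_upwards [hcont.eventually hz] with θ' hθ'
        simp [hθ']
    simpa using h0
  have hsupint : ∀ θ', Integrable (fun ω => Y.sup' hY (fun y => ⟪θ' + Z ω, y⟫)) μ :=
    fun θ' => integrable_sup' μ Y hY Z hZmeas hZ θ'
  have hinnerint : ∀ (v : EuclideanSpace ℝ (Fin m)) θ',
      Integrable (fun ω => ⟪v, g (θ' + Z ω)⟫) μ := fun v θ' => (hgint θ').const_inner v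
  have hsand : ∀ θ', 0 ≤ F θ' - F θ - ⟪θ' - θ, G⟫ ∧
      F θ' - F θ - ⟪θ' - θ, G⟫ ≤ ‖θ' - θ‖ * h θ' := by
    intro θ'
    have hGinner : ⟪θ' - θ, G⟫ = ∫ ω, ⟪θ' - θ, g (θ + Z ω)⟫ ∂μ :=
      (integral_inner (hgint θ) (θ' - θ)).symm
    have hD : F θ' - F θ - ⟪θ' - θ, G⟫ =
        ∫ ω, (Y.sup' hY (fun y => ⟪θ' + Z ω, y⟫) - Y.sup' hY (fun y => ⟪θ + Z ω, y⟫)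
          - ⟪θ' - θ, g (θ + Z ω)⟫) ∂μ := by
      have hAB : Integrable (fun ω =>
          (Y.sup' hY fun y => ⟪θ' + Z ω, y⟫) - Y.sup' hY fun y => ⟪θ + Z ω, y⟫) μ :=
        (hsupint θ').sub (hsupint θ)
      rw [hGinner, hFdef,
        integral_sub hAB (hinnerint (θ' - θ) θ),
        integral_sub (hsupint θ') (hsupint θ)]
    constructor
    · rw [hD]
      apply integral_nonneg
      intro ω
      have e1 : ⟪θ' + Z ω, g (θ + Z ω)⟫ ≤ Y.sup' hY (fun y => ⟪θ' + Z ω, y⟫) := hlow _ _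
      have e2 : Y.sup' hY (fun y => ⟪θ + Z ω, y⟫) = ⟪θ + Z ω, g (θ + Z ω)⟫ := hfeq _
      have expand : ⟪θ' + Z ω, g (θ + Z ω)⟫ - ⟪θ + Z ω, g (θ + Z ω)⟫
          = ⟪θ' - θ, g (θ + Z ω)⟫ := by
        simp only [inner_add_left, inner_sub_left]
        ring
      simp only [Pi.zero_apply]
      linarith
    · rw [hD]
      have hptwise : ∀ ω, (Y.sup' hY (fun y => ⟪θ' + Z ω, y⟫)
            - Y.sup' hY (fun y => ⟪θ + Z ω, y⟫) - ⟪θ' - θ, g (θ + Z ω)⟫)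
          ≤ ‖θ' - θ‖ * ‖g (θ' + Z ω) - g (θ + Z ω)‖ := by
        intro ω
        have e1 : Y.sup' hY (fun y => ⟪θ' + Z ω, y⟫) = ⟪θ' + Z ω, g (θ' + Z ω)⟫ := hfeq _
        have e2 : ⟪θ + Z ω, g (θ' + Z ω)⟫ ≤ Y.sup' hY (fun y => ⟪θ + Z ω, y⟫) := hlow _ _
        have e3 : ⟪θ' - θ, g (θ' + Z ω) - g (θ + Z ω)⟫
            ≤ ‖θ' - θ‖ * ‖g (θ' + Z ω) - g (θ + Z ω)‖ := real_inner_le_norm _ _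
        have expand : ⟪θ' + Z ω, g (θ' + Z ω)⟫ - ⟪θ + Z ω, g (θ' + Z ω)⟫
              - ⟪θ' - θ, g (θ + Z ω)⟫
            = ⟪θ' - θ, g (θ' + Z ω) - g (θ + Z ω)⟫ := by
          simp only [inner_add_left, inner_sub_left, inner_sub_right]
          ring
        linarith
      calc ∫ ω, (Y.sup' hY (fun y => ⟪θ' + Z ω, y⟫)
              - Y.sup' hY (fun y => ⟪θ + Z ω, y⟫) - ⟪θ' - θ, g (θ + Z ω)⟫) ∂μ
          ≤ ∫ ω, ‖θ' - θ‖ * ‖g (θ' + Z ω) - g (θ + Z ω)‖ ∂μ := by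
            exact integral_mono (((hsupint θ').sub (hsupint θ)).sub (hinnerint _ θ))
              ((hdiffint θ').const_mul _) hptwise
        _ = ‖θ' - θ‖ * h θ' := by rw [hhdef]; exact integral_const_mul _ _
  have hgrad : HasGradientAt F G θ := by
    rw [hasGradientAt_iff_hasFDerivAt]
    refine HasFDerivAt.of_isLittleO (Asymptotics.IsLittleO.of_bound fun c hc => ?_)
    filter_upwards [htendsto.eventually (eventually_lt_nhds hc)] with θ' hθ'
    have hs := hsand θ'
    simp only [InnerProductSpace.toDual_apply_apply]
    rw [real_inner_comm G (θ' - θ)] at hs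
    rw [Real.norm_eq_abs, abs_of_nonneg hs.1]
    calc F θ' - F θ - ⟪G, θ' - θ⟫ ≤ ‖θ' - θ‖ * h θ' := hs.2
      _ ≤ ‖θ' - θ‖ * c := mul_le_mul_of_nonneg_left (le_of_lt hθ') (norm_nonneg _)
      _ = c * ‖θ' - θ‖ := mul_comm _ _
  have hmem : G ∈ convexHull ℝ (Y : Set (EuclideanSpace ℝ (Fin m))) := by
    refine (convex_convexHull ℝ _).integral_mem
      ((Y.finite_toSet.isCompact_convexHull ℝ).isClosed) ?_ (hgint θ)
    exact Filter.Eventually.of_forall fun ω => subset_convexHull ℝ _ (hg _).1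
  have hlin : HasGradientAt (fun θ' : EuclideanSpace ℝ (Fin m) => ⟪θ', ystar⟫) ystar θ := by
    rw [hasGradientAt_iff_hasFDerivAt]
    have heq : (fun θ' : EuclideanSpace ℝ (Fin m) => ⟪θ', ystar⟫)
        = fun θ' => (InnerProductSpace.toDual ℝ (EuclideanSpace ℝ (Fin m)) ystar) θ' := by
      funext θ'
      rw [InnerProductSpace.toDual_apply_apply, real_inner_comm]
    rw [heq]
    exact (InnerProductSpace.toDual ℝ (EuclideanSpace ℝ (Fin m)) ystar).hasFDerivAt
  have hsub : HasGradientAt (fun θ' => F θ' - ⟪θ', ystar⟫) (G - ystar) θ := by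
    rw [hasGradientAt_iff_hasFDerivAt]
    have hfd := hgrad.hasFDerivAt.sub hlin.hasFDerivAt
    rw [map_sub]
    exact hfd
  exact ⟨hgrad.gradient, by rw [hgrad.gradient]; exact hmem,
    ⟨G, hmem, by simpa using hsub.gradient.symm⟩⟩
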